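/- arXiv:2308.12768 — 2 statements merged into one kernel-verified Lean document; each statement's English description precedes it below -/
import Mathlib

section
/- For every w ∈ W_p, the orbit of w·λ + pX under the dot action of W_I on X/pX has exactly |W_I| elements; that is, N_I(w·λ) = |W_I|. -/
noncomputable section

/-- The real vector space `X ⊗ ℝ`, where `X` is a free abelian group of rank `r`. -/
abbrev Vr (r : ℕ) := Fin r → ℝ

/-- The lattice `X` (identified with `ℤ^r`); its dual lattice `Y` is identified with
the same coordinate lattice via the standard perfect pairing. -/
abbrev Lr (r : ℕ) := Fin r → ℤ

/-- The embedding `X → X ⊗ ℝ`. -/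
def toV {r : ℕ} (x : Lr r) : Vr r := fun i => (x i : ℝ)

/-- The perfect pairing `⟨·,·⟩ : X × Y → ℤ`. -/
def pairZ {r : ℕ} (x y : Lr r) : ℤ := ∑ i, x i * y i

/-- The real extension of the pairing to `(X ⊗ ℝ) × Y → ℝ`. -/
def pairR {r : ℕ} (v : Vr r) (y : Lr r) : ℝ := ∑ i, v i * (y i : ℝ)

/-- The subgroup `ℤI` of `X` generated by a subset `I ⊆ X`. -/
def ZI {r : ℕ} (I : Finset (Lr r)) : AddSubgroup (Lr r) :=
  AddSubgroup.closure (I : Set (Lr r))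

/-- The data of a reduced crystallographic root system `Φ ⊆ X` with a fixed positive
system `Φ⁺`, simple roots `Φ_s`, coroots `α∨ ∈ Y`, a prime `p`, and the half-sum
`ρ ∈ X` of the positive roots. -/
structure ARDatum (r : ℕ) where
  Φ : Finset (Lr r)
  pos : Finset (Lr r)
  simples : Finset (Lr r)
  coroot : Lr r → Lr r
  p : ℕ
  ρ : Lr r
  hp : p.Prime
  root_ne_zero : ∀ α ∈ Φ, α ≠ 0
  pos_sub : pos ⊆ Φ
  simples_sub : simples ⊆ pos
  pos_or_neg : ∀ α ∈ Φ, α ∈ pos ∨ -α ∈ pos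
  not_pos_and_neg : ∀ α ∈ pos, -α ∉ pos
  neg_mem : ∀ α ∈ Φ, -α ∈ Φ
  root_coroot_two : ∀ α ∈ Φ, pairZ α (coroot α) = 2
  reflect_root_mem : ∀ α ∈ Φ, ∀ β ∈ Φ, β - pairZ β (coroot α) • α ∈ Φ
  reflect_coroot_mem : ∀ α ∈ Φ, ∀ β ∈ Φ,
    coroot β - pairZ α (coroot β) • coroot α ∈ coroot '' (Φ : Set (Lr r))
  reduced : ∀ α ∈ Φ, ∀ c : ℤ, c • α ∈ Φ → c = 1 ∨ c = -1
  pos_sum_simples : ∀ β ∈ pos, ∃ c : Lr r → ℕ, β = ∑ α ∈ simples, (c α : ℤ) • α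
  two_rho : (2 : ℤ) • ρ = ∑ α ∈ pos, α

namespace ARDatum

/-- The group of affine transformations of `X ⊗ ℝ`. -/
abbrev G (r : ℕ) := (Vr r) ≃ᵃ[ℝ] (Vr r)

variable {r : ℕ} (D : ARDatum r)

/-- `g` is the affine reflection `s_{α,mp} : v ↦ v − (⟨v,α∨⟩ − mp)·α`. -/
def IsRefl (α : Lr r) (m : ℤ) (g : G r) : Prop :=
  ∀ v : Vr r, g v = v - (pairR v (D.coroot α) - (m : ℝ) * (D.p : ℝ)) • toV α

/-- `g` is the linear reflection `s_α : v ↦ v − ⟨v,α∨⟩·α`. -/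
def IsLinRefl (α : Lr r) (g : G r) : Prop := D.IsRefl α 0 g

/-- `g` is the translation `t_{α,mp} : v ↦ v + mp·α`. -/
def IsTransl (α : Lr r) (m : ℤ) (g : G r) : Prop :=
  ∀ v : Vr r, g v = v + ((m : ℝ) * (D.p : ℝ)) • toV α

/-- The affine Weyl group `W_p`, generated by the `s_α` and the `t_{α,mp}`
for `α ∈ Φ⁺`, `m ∈ ℤ`. -/
def Wp : Subgroup (G r) :=
  Subgroup.closure ({g | ∃ α ∈ D.pos, D.IsLinRefl α g} ∪
    {g | ∃ α ∈ D.pos, ∃ m : ℤ, D.IsTransl α m g})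

/-- The finite Weyl group `W`, generated by the `s_α` for `α ∈ Φ⁺`. -/
def W : Subgroup (G r) :=
  Subgroup.closure {g | ∃ α ∈ D.pos, D.IsLinRefl α g}

/-- The subgroup `W_{I,p}` generated by the `s_α` and `t_{α,mp}` for `α ∈ I`. -/
def WIp (I : Finset (Lr r)) : Subgroup (G r) :=
  Subgroup.closure ({g | ∃ α ∈ I, D.IsLinRefl α g} ∪
    {g | ∃ α ∈ I, ∃ m : ℤ, D.IsTransl α m g})

/-- The subgroup `W_I` of `W` generated by the `s_α` for `α ∈ I`. -/
def WI (I : Finset (Lr r)) : Subgroup (G r) :=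
  Subgroup.closure {g | ∃ α ∈ I, D.IsLinRefl α g}

/-- `g` is a reflection (the reflections of `W_p` are exactly the `s_{α,mp}`). -/
def IsReflection (g : G r) : Prop := ∃ α ∈ D.pos, ∃ m : ℤ, D.IsRefl α m g

/-- The dot action `w·v := w(v+ρ) − ρ`. -/
def dot (g : G r) (v : Vr r) : Vr r := g (v + toV D.ρ) - toV D.ρ

/-- The hyperplane `H_{α,n} = {v : ⟨v+ρ,α∨⟩ = np}`. -/
def Hyp (α : Lr r) (n : ℤ) : Set (Vr r) :=
  {v | pairR (v + toV D.ρ) (D.coroot α) = (n : ℝ) * (D.p : ℝ)}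

/-- The complement of the union of all the hyperplanes `H_{α,n}`. -/
def Reg : Set (Vr r) :=
  {v | ∀ α ∈ D.pos, ∀ n : ℤ, pairR (v + toV D.ρ) (D.coroot α) ≠ (n : ℝ) * (D.p : ℝ)}

/-- The alcove containing `v` (the connected component of `v` in the complement of
the hyperplanes). -/
def alcoveOf (v : Vr r) : Set (Vr r) := connectedComponentIn D.Reg v

/-- `H_{α,n}` contains a wall of `A`, i.e. the interior of `closure A ∩ H_{α,n}`
inside the hyperplane `H_{α,n}` is nonempty. -/
def HasWall (A : Set (Vr r)) (α : Lr r) (n : ℤ) : Prop :=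
  ∃ x ∈ closure A ∩ D.Hyp α n, ∃ ε > 0,
    ∀ y ∈ D.Hyp α n, dist y x < ε → y ∈ closure A

/-- The fundamental alcove `C`. -/
def FundC : Set (Vr r) :=
  {v | ∀ α ∈ D.pos, 0 < pairR (v + toV D.ρ) (D.coroot α) ∧
    pairR (v + toV D.ρ) (D.coroot α) < (D.p : ℝ)}

/-- The closure `C̄` of the fundamental alcove. -/
def FundCBar : Set (Vr r) :=
  {v | ∀ α ∈ D.pos, 0 ≤ pairR (v + toV D.ρ) (D.coroot α) ∧
    pairR (v + toV D.ρ) (D.coroot α) ≤ (D.p : ℝ)}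

/-- The region `C_I`. -/
def CI (I : Finset (Lr r)) : Set (Vr r) :=
  {v | ∀ α ∈ D.pos, α ∈ ZI I → 0 < pairR (v + toV D.ρ) (D.coroot α) ∧
    pairR (v + toV D.ρ) (D.coroot α) < (D.p : ℝ)}

/-- The region `C̄_I`. -/
def CIBar (I : Finset (Lr r)) : Set (Vr r) :=
  {v | ∀ α ∈ D.pos, α ∈ ZI I → 0 ≤ pairR (v + toV D.ρ) (D.coroot α) ∧
    pairR (v + toV D.ρ) (D.coroot α) ≤ (D.p : ℝ)}

/-- `S_p`: the reflections of `W_p` in the walls of the fundamental alcove `C`. -/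
def Sp : Set (G r) :=
  {g | g ∈ D.Wp ∧ ∃ α ∈ D.pos, ∃ m : ℤ, D.IsRefl α m g ∧ D.HasWall D.FundC α m}

/-- One step of the order `⪯` (`↑`): `s_{α,mp}·u ⪯ u` whenever `⟨u+ρ,α∨⟩ ≥ mp`. -/
def UpStep (v u : Vr r) : Prop :=
  ∃ α ∈ D.pos, ∃ m : ℤ, (m : ℝ) * (D.p : ℝ) ≤ pairR (u + toV D.ρ) (D.coroot α) ∧
    v = u - (pairR (u + toV D.ρ) (D.coroot α) - (m : ℝ) * (D.p : ℝ)) • toV α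

/-- The order `⪯` (`↑`): the reflexive-transitive closure of `UpStep`. -/
def Up : Vr r → Vr r → Prop := Relation.ReflTransGen D.UpStep

/-- The strict order `≺`. -/
def Ups (v u : Vr r) : Prop := D.Up v u ∧ v ≠ u

/-- The order `≤`: `v ≤ u` iff `u − v` is a `ℤ≥0`-combination of the simple roots. -/
def Le (v u : Vr r) : Prop :=
  ∃ c : Lr r → ℕ, u - v = ∑ α ∈ D.simples, (c α : ℝ) • toV α

/-- The strict order `<`. -/
def Lt (v u : Vr r) : Prop := D.Le v u ∧ v ≠ u

/-- `X₊ = {ν ∈ X : ⟨ν+ρ,α∨⟩ ≥ 0 for all α ∈ Φ⁺}`, viewed inside `X ⊗ ℝ`. -/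
def XplusR : Set (Vr r) :=
  {v | (∃ ν : Lr r, toV ν = v) ∧ ∀ α ∈ D.pos, 0 ≤ pairR (v + toV D.ρ) (D.coroot α)}

/-- `n_α(v)`: the unique integer with `n_α(v)·p < ⟨v+ρ,α∨⟩ < (n_α(v)+1)·p`
(for `v` on none of the hyperplanes), realised as a floor. -/
def nfl (v : Vr r) (α : Lr r) : ℤ := ⌊pairR (v + toV D.ρ) (D.coroot α) / (D.p : ℝ)⌋

/-- `d(v) = ∑_{α ∈ Φ⁺} n_α(v)`. -/
def dfn (v : Vr r) : ℤ := ∑ α ∈ D.pos, D.nfl v α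

/-- The sublattice `pX` of `X`. -/
def pLat : AddSubgroup (Lr r) where
  carrier := {x | ∃ y : Lr r, x = (D.p : ℤ) • y}
  zero_mem' := ⟨0, by simp⟩
  add_mem' := by rintro a b ⟨y, rfl⟩ ⟨z, rfl⟩; exact ⟨y + z, (smul_add _ _ _).symm⟩
  neg_mem' := by rintro a ⟨y, rfl⟩; exact ⟨-y, (smul_neg _ _).symm⟩

/-- The orbit of `ν + pX` under the dot action of `W_I` on `X/pX`. -/
def dotOrbit (I : Finset (Lr r)) (ν : Lr r) : Set (Lr r ⧸ D.pLat) :=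
  {c | ∃ w ∈ D.WI I, ∃ ν' : Lr r, toV ν' = D.dot w (toV ν) ∧
    c = QuotientAddGroup.mk ν'}

end ARDatum

section Helpers

variable {r : ℕ}

lemma toV_injective : Function.Injective (toV (r := r)) := by
  intro a b h
  funext i
  exact Int.cast_injective (congrFun h i)

@[simp] lemma toV_zero : toV (0 : Lr r) = 0 := by funext i; simp [toV]

lemma toV_add (a b : Lr r) : toV (a + b) = toV a + toV b := by
  funext i; simp [toV]

lemma toV_sub (a b : Lr r) : toV (a - b) = toV a - toV b := by
  funext i; simp [toV]

lemma toV_neg (a : Lr r) : toV (-a) = -toV a := by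
  funext i; simp [toV]

lemma toV_zsmul (n : ℤ) (a : Lr r) : toV (n • a) = (n : ℝ) • toV a := by
  funext i; simp [toV]

lemma pairR_toV (x y : Lr r) : pairR (toV x) y = (pairZ x y : ℝ) := by
  simp [pairR, pairZ, toV]

@[simp] lemma pairR_zero (y : Lr r) : pairR (0 : Vr r) y = 0 := by simp [pairR]

lemma pairR_sub (v w : Vr r) (y : Lr r) : pairR (v - w) y = pairR v y - pairR w y := by
  simp [pairR, sub_mul, Finset.sum_sub_distrib]

lemma pairR_smul (c : ℝ) (v : Vr r) (y : Lr r) : pairR (c • v) y = c * pairR v y := by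
  simp [pairR, Finset.mul_sum, mul_assoc]

namespace ARDatum

variable (D : ARDatum r)

lemma dot_mul (g h : ARDatum.G r) (v : Vr r) :
    D.dot (g * h) v = D.dot g (D.dot h v) := by
  simp [ARDatum.dot, AffineEquiv.coe_mul, Function.comp]

lemma dot_one (v : Vr r) : D.dot 1 v = v := by
  simp [ARDatum.dot, AffineEquiv.one_def]

/-- linear reflections for roots are involutions -/
lemma linrefl_invol {α : Lr r} (hα : α ∈ D.Φ) {g : ARDatum.G r}
    (hg : D.IsLinRefl α g) : g * g = 1 := by
  have h2 : pairR (toV α) (D.coroot α) = 2 := by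
    rw [pairR_toV, D.root_coroot_two α hα]; norm_num
  apply AffineEquiv.ext
  intro v
  rw [ARDatum.IsLinRefl, ARDatum.IsRefl] at hg
  simp only [Int.cast_zero, zero_mul, sub_zero] at hg
  rw [AffineEquiv.coe_mul, Function.comp_apply, hg (g v), hg v,
    pairR_sub, pairR_smul, h2]
  show _ = (1 : ARDatum.G r) v
  rw [AffineEquiv.one_def, AffineEquiv.coe_refl, id_eq]
  module

lemma WI_fix_zero (I : Finset (Lr r)) :
    ∀ g ∈ D.WI I, g (0 : Vr r) = 0 := by
  intro g hg
  refine Subgroup.closure_induction ?_ ?_ ?_ ?_ hg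
  · rintro g ⟨α, _, hg⟩ 
    rw [hg 0]
    simp
  · rw [AffineEquiv.one_def, AffineEquiv.coe_refl, id_eq]
  · intro a b _ _ ha hb
    rw [AffineEquiv.coe_mul, Function.comp_apply, hb, ha]
  · intro a _ ha
    have : a⁻¹ (a 0) = (0 : Vr r) := by
      rw [show a⁻¹ (a 0) = (a⁻¹ * a) 0 from rfl, inv_mul_cancel,
        AffineEquiv.one_def, AffineEquiv.coe_refl, id_eq]
    rwa [ha] at this

lemma WI_le_Wp (I : Finset (Lr r)) (hIp : ∀ α ∈ I, α ∈ D.pos) :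
    D.WI I ≤ D.Wp := by
  refine (Subgroup.closure_le _).mpr ?_
  rintro g ⟨α, hα, h⟩
  exact Subgroup.subset_closure (Or.inl ⟨α, hIp α hα, h⟩)

/-- translations by `p·y` for `y ∈ ℤI` lie in `W_p`. -/
lemma transl_mem (I : Finset (Lr r)) (hIp : ∀ α ∈ I, α ∈ D.pos) :
    ∀ y ∈ ZI I, ∃ t ∈ D.Wp, ∀ v : Vr r, t v = v + (D.p : ℝ) • toV y := by
  intro y hy
  refine AddSubgroup.closure_induction ?_ ?_ ?_ ?_ hy
  · intro α hα
    refine ⟨AffineEquiv.constVAdd ℝ (Vr r) ((D.p : ℝ) • toV α), ?_, ?_⟩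
    · refine Subgroup.subset_closure (Or.inr ⟨α, hIp α hα, 1, ?_⟩)
      intro v
      simp [ARDatum.IsTransl, vadd_eq_add]
      abel
    · intro v
      simp [vadd_eq_add]
      abel
  · exact ⟨1, one_mem _, by
      intro v
      rw [AffineEquiv.one_def, AffineEquiv.coe_refl, id_eq]
      simp⟩
  · rintro y z _ _ ⟨t₁, ht₁, h₁⟩ ⟨t₂, ht₂, h₂⟩
    refine ⟨t₁ * t₂, mul_mem ht₁ ht₂, fun v => ?_⟩
    rw [AffineEquiv.coe_mul, Function.comp_apply, h₂, h₁, toV_add, smul_add]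
    abel
  · rintro y _ ⟨t, ht, h⟩
    refine ⟨t⁻¹, inv_mem ht, fun v => ?_⟩
    apply t.injective
    have h1 : t (t⁻¹ v) = v := by
      rw [show t (t⁻¹ v) = (t * t⁻¹) v from rfl, mul_inv_cancel,
        AffineEquiv.one_def, AffineEquiv.coe_refl, id_eq]
    rw [h1, h, toV_neg, smul_neg]
    abel

end ARDatum

end Helpers

namespace ARDatum

variable {r : ℕ} (D : ARDatum r)

lemma dot_lattice (I : Finset (Lr r)) (hIΦ : ∀ α ∈ I, α ∈ D.Φ) :
    ∀ g ∈ D.WI I, ∀ x : Lr r, ∃ x' : Lr r,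
      D.dot g (toV x) = toV x' ∧ x' - x ∈ ZI I := by
  set A : ARDatum.G r → Prop := fun g =>
    ∀ x : Lr r, ∃ x' : Lr r, D.dot g (toV x) = toV x' ∧ x' - x ∈ ZI I with hA
  have hmul : ∀ g h, A g → A h → A (g * h) := by
    intro g h hg hh x
    obtain ⟨x₁, h1, m1⟩ := hh x
    obtain ⟨x₂, h2, m2⟩ := hg x₁
    refine ⟨x₂, ?_, ?_⟩
    · rw [D.dot_mul, h1, h2]
    · have h3 : x₂ - x = (x₂ - x₁) + (x₁ - x) := by abel
      rw [h3]; exact add_mem m2 m1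
  have hone : A 1 := by
    intro x
    exact ⟨x, by rw [D.dot_one], by rw [sub_self]; exact zero_mem _⟩
  have hrefl : ∀ α ∈ I, ∀ g, D.IsLinRefl α g → A g := by
    intro α hα g hg x
    refine ⟨x - pairZ (x + D.ρ) (D.coroot α) • α, ?_, ?_⟩
    · rw [ARDatum.dot, hg]
      simp only [Int.cast_zero, zero_mul, sub_zero]
      rw [← toV_add, pairR_toV, toV_sub, toV_zsmul, toV_add]
      abel
    · rw [sub_sub_cancel_left, ← neg_zsmul]
      exact AddSubgroup.zsmul_mem _
        (AddSubgroup.subset_closure (Finset.mem_coe.mpr hα)) _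
  intro g hg
  have hmain : A g ∧ A g⁻¹ := by
    refine Subgroup.closure_induction (p := fun g _ => A g ∧ A g⁻¹) ?_ ?_ ?_ ?_ hg
    · rintro g ⟨α, hα, h⟩
      have hinv : g⁻¹ = g := inv_eq_of_mul_eq_one_left (D.linrefl_invol (hIΦ α hα) h)
      exact ⟨hrefl α hα g h, by rw [hinv]; exact hrefl α hα g h⟩
    · exact ⟨hone, by rw [inv_one]; exact hone⟩
    · rintro a b _ _ ⟨ha, ha'⟩ ⟨hb, hb'⟩
      exact ⟨hmul _ _ ha hb, by rw [mul_inv_rev]; exact hmul _ _ hb' ha'⟩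
    · rintro a _ ⟨ha, ha'⟩
      exact ⟨ha', by rw [inv_inv]; exact ha⟩
  exact hmain.1

end ARDatum

/-- For every `w ∈ W_p`, the orbit of `w·λ + pX` under the dot action of `W_I`
on `X/pX` has exactly `|W_I|` elements. -/
theorem stmt1 {r : ℕ} (D : ARDatum r)
    (I : Finset (Lr r)) (hI : I ⊆ D.simples)
    (s : ARDatum.G r) (hs : s ∈ D.Sp)
    (lam mu : Lr r) (hlam : toV lam ∈ D.FundC) (hmu : toV mu ∈ D.FundCBar)
    (hmustab : ∀ g ∈ D.Wp, (D.dot g (toV mu) = toV mu ↔ g = 1 ∨ g = s))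
    (hlamstab : ∀ g ∈ D.Wp, D.dot g (toV lam) = toV lam → g = 1)
    (hpXI : ∀ x : Lr r, (x ∈ D.pLat ∧ x ∈ ZI I) ↔ ∃ y ∈ ZI I, x = (D.p : ℤ) • y)
    (w : ARDatum.G r) (hw : w ∈ D.Wp)
    (ν : Lr r) (hν : toV ν = D.dot w (toV lam)) :
    (D.dotOrbit I ν).ncard = Nat.card (D.WI I) := by
  classical
  have hIpos : ∀ α ∈ I, α ∈ D.pos := fun α h => D.simples_sub (hI h)
  have hIΦ : ∀ α ∈ I, α ∈ D.Φ := fun α h => D.pos_sub (hIpos α h)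
  have hWle := D.WI_le_Wp I hIpos
  have hlatt := D.dot_lattice I hIΦ
  have hstab : ∀ k ∈ D.Wp, D.dot k (toV ν) = toV ν → k = 1 := by
    intro k hk hfix
    have hmem : w⁻¹ * k * w ∈ D.Wp := mul_mem (mul_mem (inv_mem hw) hk) hw
    have hfix' : D.dot (w⁻¹ * k * w) (toV lam) = toV lam := by
      rw [D.dot_mul, D.dot_mul, ← hν, hfix, hν, ← D.dot_mul, inv_mul_cancel, D.dot_one]
    have h1 := hlamstab _ hmem hfix'
    have h2 : k = w * (w⁻¹ * k * w) * w⁻¹ := by group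
    rw [h2, h1]
    group
  have hchoice : ∀ g : D.WI I, ∃ x' : Lr r,
      D.dot (g : ARDatum.G r) (toV ν) = toV x' ∧ x' - ν ∈ ZI I :=
    fun g => hlatt g g.2 ν
  set F : D.WI I → Lr r := fun g => (hchoice g).choose with hF
  have hFspec : ∀ g : D.WI I,
      D.dot (g : ARDatum.G r) (toV ν) = toV (F g) ∧ F g - ν ∈ ZI I :=
    fun g => (hchoice g).choose_spec
  have hmemf : ∀ g : D.WI I,
      (QuotientAddGroup.mk (F g) : Lr r ⧸ D.pLat) ∈ D.dotOrbit I ν :=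
    fun g => ⟨g.1, g.2, F g, (hFspec g).1.symm, rfl⟩
  set f : D.WI I → D.dotOrbit I ν := fun g => ⟨QuotientAddGroup.mk (F g), hmemf g⟩ with hf
  have hinj : Function.Injective f := by
    intro g g' h
    have hq : (QuotientAddGroup.mk (F g) : Lr r ⧸ D.pLat) = QuotientAddGroup.mk (F g') :=
      congrArg Subtype.val h
    have hsub : F g - F g' ∈ D.pLat := (QuotientAddGroup.eq_iff_sub_mem).mp hq
    have hZI : F g - F g' ∈ ZI I := by
      have h3 : F g - F g' = (F g - ν) - (F g' - ν) := by abel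
      rw [h3]; exact sub_mem (hFspec g).2 (hFspec g').2
    obtain ⟨y, hyZI, hy⟩ := (hpXI (F g - F g')).mp ⟨hsub, hZI⟩
    obtain ⟨t, htWp, ht⟩ := D.transl_mem I hIpos y hyZI
    have hdott : ∀ v, D.dot t v = v + (D.p : ℝ) • toV y := by
      intro v; rw [ARDatum.dot, ht]; abel
    have htoV : toV (F g) = toV (F g') + (D.p : ℝ) • toV y := by
      have h4 := congrArg toV hy
      rw [toV_sub, toV_zsmul] at h4
      have h5 : ((D.p : ℤ) : ℝ) = (D.p : ℝ) := by push_cast; ring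
      rw [h5] at h4
      rw [← h4]; abel
    have h3 : D.dot (t * (g' : ARDatum.G r)) (toV ν) = toV (F g) := by
      rw [D.dot_mul, (hFspec g').1, hdott, htoV]
    have key : D.dot ((t * (g' : ARDatum.G r))⁻¹ * g) (toV ν) = toV ν := by
      rw [D.dot_mul, (hFspec g).1, ← h3, ← D.dot_mul, inv_mul_cancel, D.dot_one]
    have hkmem : (t * (g' : ARDatum.G r))⁻¹ * g ∈ D.Wp :=
      mul_mem (inv_mem (mul_mem htWp (hWle g'.2))) (hWle g.2)
    have hk1 := hstab _ hkmem key
    have heq : t * (g' : ARDatum.G r) = (g : ARDatum.G r) := inv_mul_eq_one.mp hk1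
    have hg0 : (g : ARDatum.G r) 0 = 0 := D.WI_fix_zero I g g.2
    have hg'0 : (g' : ARDatum.G r) 0 = 0 := D.WI_fix_zero I g' g'.2
    have hy0 : (D.p : ℝ) • toV y = 0 := by
      have h6 : (t * (g' : ARDatum.G r)) 0 = (0 : Vr r) := by rw [heq, hg0]
      rw [AffineEquiv.coe_mul, Function.comp_apply, hg'0, ht] at h6
      simpa using h6
    have hgg' : (g : ARDatum.G r) = (g' : ARDatum.G r) := by
      rw [← heq]
      apply AffineEquiv.ext
      intro v
      rw [AffineEquiv.coe_mul, Function.comp_apply, ht, hy0, add_zero]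
    exact Subtype.ext hgg'
  have hsurj : Function.Surjective f := by
    rintro ⟨c, u, hu, ν', hν', rfl⟩
    refine ⟨⟨u, hu⟩, ?_⟩
    apply Subtype.ext
    show (QuotientAddGroup.mk (F ⟨u, hu⟩) : Lr r ⧸ D.pLat) = QuotientAddGroup.mk ν'
    congr 1
    apply toV_injective
    rw [← (hFspec ⟨u, hu⟩).1, hν']
  rw [← Nat.card_coe_set_eq]
  exact Nat.card_congr (Equiv.ofBijective f ⟨hinj, hsurj⟩).symm

end
end

section
/- Let w ∈ W_p be such that wsw⁻¹ ∈ W_{I,p}. Then |W_I| is even and the orbit of w·μ + pX under the dot action of W_I on X/pX has exactly |W_I|/2 elements; that is, N_I(w·μ) = |W_I|/2. -/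
noncomputable section

namespace ARProof

open ARDatum

variable {r : ℕ}

lemma toV_injective : Function.Injective (toV (r := r)) := by
  intro x y h
  funext i
  have := congrFun h i
  simp only [toV] at this
  exact_mod_cast this

lemma toV_add (x y : Lr r) : toV (x + y) = toV x + toV y := by
  funext i; simp [toV]

lemma toV_sub (x y : Lr r) : toV (x - y) = toV x - toV y := by
  funext i; simp [toV]

lemma toV_neg (x : Lr r) : toV (-x) = -toV x := by
  funext i; simp [toV]

lemma toV_zero : toV (0 : Lr r) = 0 := by
  funext i; simp [toV]

lemma toV_zsmul (n : ℤ) (x : Lr r) : toV (n • x) = (n : ℝ) • toV x := by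
  funext i; simp [toV]

lemma pairR_toV (x y : Lr r) : pairR (toV x) y = (pairZ x y : ℝ) := by
  simp [pairR, pairZ, toV]

lemma pairR_zero (y : Lr r) : pairR (0 : Vr r) y = 0 := by
  simp [pairR]

lemma pairR_sub (v w : Vr r) (y : Lr r) : pairR (v - w) y = pairR v y - pairR w y := by
  simp [pairR, sub_mul, Finset.sum_sub_distrib]

lemma pairR_add (v w : Vr r) (y : Lr r) : pairR (v + w) y = pairR v y + pairR w y := by
  simp [pairR, add_mul, Finset.sum_add_distrib]

lemma pairR_smul (c : ℝ) (v : Vr r) (y : Lr r) : pairR (c • v) y = c * pairR v y := by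
  simp [pairR, Finset.mul_sum, mul_assoc]

lemma G_mul_apply (g h : ARDatum.G r) (v : Vr r) : (g * h) v = g (h v) := rfl

lemma G_one_apply (v : Vr r) : (1 : ARDatum.G r) v = v := rfl

lemma apply_eq_linear (u : ARDatum.G r) (h0 : u 0 = 0) (a : Vr r) :
    u a = u.linear a := by
  have h := u.map_vadd (0 : Vr r) a
  simpa [h0] using h

lemma lin_add (u : ARDatum.G r) (h0 : u 0 = 0) (a b : Vr r) :
    u (a + b) = u a + u b := by
  rw [apply_eq_linear u h0, apply_eq_linear u h0, apply_eq_linear u h0, map_add]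

lemma lin_smul (u : ARDatum.G r) (h0 : u 0 = 0) (c : ℝ) (a : Vr r) :
    u (c • a) = c • u a := by
  rw [apply_eq_linear u h0, apply_eq_linear u h0, map_smul]

lemma lin_sub (u : ARDatum.G r) (h0 : u 0 = 0) (a b : Vr r) :
    u (a - b) = u a - u b := by
  rw [apply_eq_linear u h0, apply_eq_linear u h0, apply_eq_linear u h0, map_sub]

variable (D : ARDatum r) (I : Finset (Lr r))

/-- reflections are involutions -/
lemma refl_sq {α : Lr r} {m : ℤ} {g : ARDatum.G r}
    (hα2 : pairZ α (D.coroot α) = 2) (hg : D.IsRefl α m g) :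
    g * g = 1 := by
  apply AffineEquiv.ext
  intro v
  rw [G_mul_apply, hg, hg, G_one_apply]
  rw [pairR_sub, pairR_smul, pairR_toV, hα2]
  push_cast
  rw [sub_smul, sub_smul, sub_smul]
  module


lemma G_inv_apply (g : ARDatum.G r) (v : Vr r) : g⁻¹ v = g.symm v := rfl

lemma WI_fix0 {u : ARDatum.G r} (hu : u ∈ D.WI I) : u 0 = 0 := by
  induction hu using Subgroup.closure_induction with
  | mem g hg =>
      obtain ⟨α, hα, hrefl⟩ := hg
      rw [hrefl 0]
      simp [pairR_zero]
  | one => rfl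
  | mul g h hg hh ihg ihh => rw [G_mul_apply, ihh, ihg]
  | inv g hg ih =>
      have h2 : g⁻¹ (g 0) = 0 := by
        rw [← G_mul_apply, inv_mul_cancel, G_one_apply]
      rw [ih] at h2
      exact h2

lemma dot_mul (g h : ARDatum.G r) (v : Vr r) :
    D.dot (g * h) v = D.dot g (D.dot h v) := by
  simp [ARDatum.dot, G_mul_apply, sub_add_cancel]

lemma dot_one (v : Vr r) : D.dot 1 v = v := by
  simp [ARDatum.dot, G_one_apply]

lemma WI_lattice2 (hI : I ⊆ D.simples) {u : ARDatum.G r} (hu : u ∈ D.WI I) :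
    (∀ x : Lr r, ∃ d ∈ ZI I, u (toV x) = toV (x + d)) ∧
      (∀ x : Lr r, ∃ d ∈ ZI I, u⁻¹ (toV x) = toV (x + d)) := by
  induction hu using Subgroup.closure_induction with
    | mem g hg =>
        obtain ⟨α, hα, hrefl⟩ := hg
        have hα2 : pairZ α (D.coroot α) = 2 :=
          D.root_coroot_two α (D.pos_sub (D.simples_sub (hI hα)))
        have hginv : g⁻¹ = g := inv_eq_of_mul_eq_one_right (refl_sq D hα2 hrefl)
        have main : ∀ x : Lr r, ∃ d ∈ ZI I, g (toV x) = toV (x + d) := by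
          intro x
          refine ⟨(-(pairZ x (D.coroot α))) • α,
            AddSubgroup.zsmul_mem _ (AddSubgroup.subset_closure hα) _, ?_⟩
          rw [hrefl (toV x), pairR_toV, toV_add, toV_zsmul]
          push_cast
          module
        exact ⟨main, by rw [hginv]; exact main⟩
    | one =>
        constructor <;> intro x <;>
          exact ⟨0, zero_mem _, by simp [G_one_apply, add_zero]⟩
    | mul g h hg hh ihg ihh =>
        obtain ⟨ihg1, ihg2⟩ := ihg
        obtain ⟨ihh1, ihh2⟩ := ihh
        constructor
        · intro x
          obtain ⟨d1, hd1, he1⟩ := ihh1 x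
          obtain ⟨d2, hd2, he2⟩ := ihg1 (x + d1)
          exact ⟨d1 + d2, add_mem hd1 hd2,
            by rw [G_mul_apply, he1, he2, add_assoc]⟩
        · intro x
          obtain ⟨d1, hd1, he1⟩ := ihg2 x
          obtain ⟨d2, hd2, he2⟩ := ihh2 (x + d1)
          exact ⟨d1 + d2, add_mem hd1 hd2,
            by rw [mul_inv_rev, G_mul_apply, he1, he2, add_assoc]⟩
    | inv g hg ih => exact ⟨ih.2, by rw [inv_inv]; exact ih.1⟩

lemma WI_lattice {u : ARDatum.G r} (hu : u ∈ D.WI I) (hI : I ⊆ D.simples) :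
    ∀ x : Lr r, ∃ d ∈ ZI I, u (toV x) = toV (x + d) :=
  (WI_lattice2 D I hI hu).1

lemma WIp_decomp (hI : I ⊆ D.simples) {g : ARDatum.G r} (hg : g ∈ D.WIp I) :
    ∃ u ∈ D.WI I, ∃ y ∈ ZI I, ∀ v, g v = u v + toV ((D.p : ℤ) • y) := by
  induction hg using Subgroup.closure_induction with
  | mem g hg =>
      rcases hg with hg | hg
      · obtain ⟨α, hα, hrefl⟩ := hg
        exact ⟨g, Subgroup.subset_closure ⟨α, hα, hrefl⟩, 0, zero_mem _,
          fun v => by simp [toV_zero]⟩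
      · obtain ⟨α, hα, m, htr⟩ := hg
        refine ⟨1, one_mem _, m • α,
          AddSubgroup.zsmul_mem _ (AddSubgroup.subset_closure hα) _, fun v => ?_⟩
        rw [htr v, G_one_apply, toV_zsmul, toV_zsmul]
        push_cast
        module
  | one => exact ⟨1, one_mem _, 0, zero_mem _, fun v => by simp [toV_zero]⟩
  | mul g h hg hh ihg ihh =>
      obtain ⟨u, hu, a, ha, heg⟩ := ihg
      obtain ⟨u', hu', b, hb, heh⟩ := ihh
      have hu0 : u 0 = 0 := WI_fix0 D I hu
      obtain ⟨d, hd, hud⟩ := WI_lattice D I hu hI b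
      refine ⟨u * u', mul_mem hu hu', (b + d) + a,
        add_mem (add_mem hb hd) ha, fun v => ?_⟩
      rw [G_mul_apply, heh v, heg, lin_add u hu0, ← G_mul_apply,
        toV_zsmul (D.p : ℤ) b, lin_smul u hu0, hud]
      simp only [toV_zsmul, toV_add, smul_add]
      abel
  | inv g hg ih =>
      obtain ⟨u, hu, a, ha, he⟩ := ih
      have hu0 : u 0 = 0 := WI_fix0 D I hu
      have huinv : u⁻¹ ∈ D.WI I := inv_mem hu
      obtain ⟨d, hd, hud⟩ := WI_lattice D I huinv hI a
      refine ⟨u⁻¹, huinv, -(a + d), neg_mem (add_mem ha hd), fun v => ?_⟩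
      have had : u (toV (a + d)) = toV a := by
        rw [← hud, ← G_mul_apply, mul_inv_cancel, G_one_apply]
      have huu : u (u⁻¹ v) = v := by
        rw [← G_mul_apply, mul_inv_cancel, G_one_apply]
      have hneg : u (toV ((D.p : ℤ) • (-(a + d)))) = -toV ((D.p : ℤ) • a) := by
        have h1 : ((D.p : ℤ) • (-(a + d)) : Lr r) = -((D.p : ℤ) • (a + d)) := smul_neg _ _
        rw [h1, toV_neg, toV_zsmul, ← neg_smul, lin_smul u hu0, had, toV_zsmul]
        module
      have key : g (u⁻¹ v + toV ((D.p : ℤ) • (-(a + d)))) = v := by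
        rw [he, lin_add u hu0, huu, hneg]
        abel
      have := congrArg (fun z => g⁻¹ z) key
      rw [← G_mul_apply, inv_mul_cancel, G_one_apply] at this
      exact this.symm

lemma transl_mem {y : Lr r} (hy : y ∈ ZI I) :
    AffineEquiv.constVAdd ℝ (Vr r) (toV ((D.p : ℤ) • y)) ∈ D.WIp I := by
  induction hy using AddSubgroup.closure_induction with
  | mem α hα =>
      apply Subgroup.subset_closure
      right
      refine ⟨α, hα, 1, fun v => ?_⟩
      show toV ((D.p : ℤ) • α) +ᵥ v = v + (((1 : ℤ) : ℝ) * (D.p : ℝ)) • toV α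
      rw [toV_zsmul]
      push_cast
      show (D.p : ℝ) • toV α + v = _
      module
  | zero =>
      have h1 : AffineEquiv.constVAdd ℝ (Vr r) (toV ((D.p : ℤ) • (0 : Lr r))) = 1 := by
        apply AffineEquiv.ext
        intro v
        show toV ((D.p : ℤ) • (0 : Lr r)) +ᵥ v = v
        rw [smul_zero, toV_zero]
        show (0 : Vr r) + v = v
        abel
      rw [h1]
      exact one_mem _
  | add y z hy hz ihy ihz =>
      have h1 : AffineEquiv.constVAdd ℝ (Vr r) (toV ((D.p : ℤ) • (y + z)))
          = AffineEquiv.constVAdd ℝ (Vr r) (toV ((D.p : ℤ) • y))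
            * AffineEquiv.constVAdd ℝ (Vr r) (toV ((D.p : ℤ) • z)) := by
        apply AffineEquiv.ext
        intro v
        rw [G_mul_apply]
        show toV ((D.p : ℤ) • (y + z)) +ᵥ v
          = toV ((D.p : ℤ) • y) +ᵥ (toV ((D.p : ℤ) • z) +ᵥ v)
        show toV ((D.p : ℤ) • (y + z)) + v
          = toV ((D.p : ℤ) • y) + (toV ((D.p : ℤ) • z) + v)
        rw [smul_add, toV_add]
        abel
      rw [h1]
      exact mul_mem ihy ihz
  | neg y hy ihy =>
      have h1 : AffineEquiv.constVAdd ℝ (Vr r) (toV ((D.p : ℤ) • (-y)))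
          = (AffineEquiv.constVAdd ℝ (Vr r) (toV ((D.p : ℤ) • y)))⁻¹ := by
        apply eq_inv_of_mul_eq_one_left
        apply AffineEquiv.ext
        intro v
        rw [G_mul_apply, G_one_apply]
        show toV ((D.p : ℤ) • (-y)) + (toV ((D.p : ℤ) • y) + v) = v
        rw [smul_neg, toV_neg]
        abel
      rw [h1]
      exact inv_mem ihy

lemma WI_le_WIp : D.WI I ≤ D.WIp I :=
  Subgroup.closure_mono Set.subset_union_left

lemma WIp_le_Wp (hI : I ⊆ D.simples) : D.WIp I ≤ D.Wp := by
  apply Subgroup.closure_mono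
  apply Set.union_subset_union
  · rintro g ⟨α, hα, h⟩
    exact ⟨α, D.simples_sub (hI hα), h⟩
  · rintro g ⟨α, hα, m, h⟩
    exact ⟨α, D.simples_sub (hI hα), m, h⟩


lemma pLat_mem_iff (x : Lr r) : x ∈ D.pLat ↔ ∃ y : Lr r, x = (D.p : ℤ) • y := Iff.rfl

lemma dot_lattice (hI : I ⊆ D.simples) {u : ARDatum.G r} (hu : u ∈ D.WI I) (x : Lr r) :
    ∃ d ∈ ZI I, D.dot u (toV x) = toV (x + d) := by
  obtain ⟨d, hd, he⟩ := WI_lattice D I hu hI (x + D.ρ)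
  refine ⟨d, hd, ?_⟩
  show u (toV x + toV D.ρ) - toV D.ρ = toV (x + d)
  rw [← toV_add, he, show x + D.ρ + d = (x + d) + D.ρ by abel, toV_add]
  abel

/-- A lattice representative of the dot action. -/
noncomputable def dotLatFun (D : ARDatum r) (u : ARDatum.G r) (x : Lr r) : Lr r :=
  Classical.epsilon (fun x' : Lr r => D.dot u (toV x) = toV x')

lemma dotLat_eq (hI : I ⊆ D.simples) {u : ARDatum.G r} (hu : u ∈ D.WI I) (x : Lr r) :
    D.dot u (toV x) = toV (dotLatFun D u x) := by
  obtain ⟨d, hd, he⟩ := dot_lattice D I hI hu x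
  exact Classical.epsilon_spec (⟨x + d, he⟩ : ∃ x' : Lr r, D.dot u (toV x) = toV x')

lemma dotLat_add (hI : I ⊆ D.simples) {u : ARDatum.G r} (hu : u ∈ D.WI I) (x : Lr r) :
    ∃ d ∈ ZI I, dotLatFun D u x = x + d := by
  obtain ⟨d, hd, he⟩ := dot_lattice D I hI hu x
  exact ⟨d, hd, toV_injective (by rw [← dotLat_eq D I hI hu x, he])⟩

lemma dot_mod_p (hI : I ⊆ D.simples) {u : ARDatum.G r} (hu : u ∈ D.WI I)
    {x x' : Lr r} (h : -x + x' ∈ D.pLat) :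
    -(dotLatFun D u x) + dotLatFun D u x' ∈ D.pLat := by
  obtain ⟨z, hz⟩ := h
  have hu0 : u 0 = 0 := WI_fix0 D I hu
  obtain ⟨d, hd, hdz⟩ := WI_lattice D I hu hI z
  refine ⟨z + d, toV_injective ?_⟩
  rw [toV_add, toV_neg, ← dotLat_eq D I hI hu x, ← dotLat_eq D I hI hu x']
  show -(u (toV x + toV D.ρ) - toV D.ρ) + (u (toV x' + toV D.ρ) - toV D.ρ)
      = toV ((D.p : ℤ) • (z + d))
  have e1 : -(u (toV x + toV D.ρ) - toV D.ρ) + (u (toV x' + toV D.ρ) - toV D.ρ)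
      = u (toV x' + toV D.ρ) - u (toV x + toV D.ρ) := by abel
  rw [e1, ← lin_sub u hu0]
  have e2 : toV x' + toV D.ρ - (toV x + toV D.ρ) = toV ((D.p : ℤ) • z) := by
    rw [← toV_add, ← toV_add, ← toV_sub, show x' + D.ρ - (x + D.ρ) = -x + x' by abel, hz]
  rw [e2, toV_zsmul, lin_smul u hu0, hdz, toV_zsmul]

/-- The dot action of `W_I` on `X/pX`. -/
noncomputable def dotAction (D : ARDatum r) (I : Finset (Lr r)) (hI : I ⊆ D.simples) :
    MulAction (D.WI I) (Lr r ⧸ D.pLat) where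
  smul u q := Quotient.map' (fun x => dotLatFun D (u : ARDatum.G r) x)
    (fun a b hab => by
      rw [QuotientAddGroup.leftRel_apply] at hab ⊢
      exact dot_mod_p D I hI u.2 hab) q
  one_smul q := by
    induction q using Quotient.inductionOn' with
    | h a =>
      show Quotient.map' _ _ (Quotient.mk'' a) = Quotient.mk'' a
      rw [Quotient.map'_mk'']
      have h1 : dotLatFun D ((1 : D.WI I) : ARDatum.G r) a = a := by
        apply toV_injective
        rw [← dotLat_eq D I hI (SetLike.coe_mem (1 : D.WI I)) a]
        rw [show ((1 : D.WI I) : ARDatum.G r) = 1 from rfl, dot_one]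
      rw [h1]
  mul_smul u v q := by
    induction q using Quotient.inductionOn' with
    | h a =>
      show Quotient.map' _ _ (Quotient.mk'' a)
        = Quotient.map' _ _ (Quotient.map' _ _ (Quotient.mk'' a))
      rw [Quotient.map'_mk'', Quotient.map'_mk'', Quotient.map'_mk'']
      have h1 : dotLatFun D ((u * v : D.WI I) : ARDatum.G r) a
          = dotLatFun D (u : ARDatum.G r) (dotLatFun D (v : ARDatum.G r) a) := by
        apply toV_injective
        rw [← dotLat_eq D I hI (SetLike.coe_mem (u * v)) a,
          ← dotLat_eq D I hI (SetLike.coe_mem u) (dotLatFun D (v : ARDatum.G r) a)]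
        rw [show ((u * v : D.WI I) : ARDatum.G r) = (u : ARDatum.G r) * (v : ARDatum.G r) from rfl]
        rw [dot_mul, dotLat_eq D I hI (SetLike.coe_mem v) a]
      rw [h1]


set_option synthInstance.maxHeartbeats 1000000 in
lemma final_count (hI : I ⊆ D.simples) (ν : Lr r) (σT : D.WI I) (hσTne : σT ≠ 1)
    (hstabiff : ∀ u : D.WI I,
      (-(dotLatFun D (u : ARDatum.G r) ν) + ν ∈ D.pLat) ↔ (u = 1 ∨ u = σT)) :
    Even (Nat.card (D.WI I)) ∧ (D.dotOrbit I ν).ncard = Nat.card (D.WI I) / 2 := by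
  letI actI := dotAction D I hI
  have hsmul : ∀ (u : D.WI I) (x : Lr r),
      u • (QuotientAddGroup.mk x : Lr r ⧸ D.pLat)
        = QuotientAddGroup.mk (dotLatFun D (u : ARDatum.G r) x) := by
    intro u x
    show Quotient.map' _ _ (Quotient.mk'' x) = Quotient.mk'' (dotLatFun D (u : ARDatum.G r) x)
    rw [Quotient.map'_mk'']
  set q0 : Lr r ⧸ D.pLat := QuotientAddGroup.mk ν with hq0
  have hstabset : (MulAction.stabilizer (D.WI I) q0 : Set (D.WI I)) = {1, σT} := by
    ext u
    simp only [SetLike.mem_coe, MulAction.mem_stabilizer_iff, Set.mem_insert_iff,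
      Set.mem_singleton_iff]
    rw [hq0, hsmul u ν, QuotientAddGroup.eq]
    exact hstabiff u
  have horb : MulAction.orbit (D.WI I) q0 = D.dotOrbit I ν := by
    ext q
    constructor
    · rintro ⟨u, rfl⟩
      refine ⟨(u : ARDatum.G r), u.2, dotLatFun D (u : ARDatum.G r) ν,
        (dotLat_eq D I hI u.2 ν).symm, ?_⟩
      exact hsmul u ν
    · rintro ⟨g, hg, ν', hν', rfl⟩
      refine ⟨⟨g, hg⟩, ?_⟩
      have h2 : dotLatFun D g ν = ν' := by
        apply toV_injective
        rw [← dotLat_eq D I hI hg ν, hν']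
      show (⟨g, hg⟩ : D.WI I) • (QuotientAddGroup.mk ν : Lr r ⧸ D.pLat) = QuotientAddGroup.mk ν'
      rw [hsmul ⟨g, hg⟩ ν, h2]
  have hcard_stab : Nat.card (MulAction.stabilizer (D.WI I) q0) = 2 := by
    have h1 : Nat.card (MulAction.stabilizer (D.WI I) q0)
        = ((MulAction.stabilizer (D.WI I) q0 : Set (D.WI I))).ncard :=
      Nat.card_coe_set_eq _
    rw [h1, hstabset, Set.ncard_pair (Ne.symm hσTne)]
  have hcards : Nat.card (D.WI I)
      = Nat.card (MulAction.orbit (D.WI I) q0) * 2 := by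
    rw [Subgroup.card_eq_card_quotient_mul_card_subgroup
      (MulAction.stabilizer (D.WI I) q0), hcard_stab]
    congr 1
    exact (Nat.card_congr (MulAction.orbitEquivQuotientStabilizer (D.WI I) q0)).symm
  have hncard : Nat.card (MulAction.orbit (D.WI I) q0) = (D.dotOrbit I ν).ncard := by
    rw [horb]
    exact Nat.card_coe_set_eq _
  rw [hncard] at hcards
  constructor
  · exact ⟨(D.dotOrbit I ν).ncard, by omega⟩
  · omega


end ARProof

/-- If `wsw⁻¹ ∈ W_{I,p}`, then `|W_I|` is even and the orbit of `w·μ + pX` under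
the dot action of `W_I` on `X/pX` has exactly `|W_I|/2` elements. -/
theorem stmt3 {r : ℕ} (D : ARDatum r)
    (I : Finset (Lr r)) (hI : I ⊆ D.simples)
    (s : ARDatum.G r) (hs : s ∈ D.Sp)
    (lam mu : Lr r) (hlam : toV lam ∈ D.FundC) (hmu : toV mu ∈ D.FundCBar)
    (hmustab : ∀ g ∈ D.Wp, (D.dot g (toV mu) = toV mu ↔ g = 1 ∨ g = s))
    (hlamstab : ∀ g ∈ D.Wp, D.dot g (toV lam) = toV lam → g = 1)
    (hpXI : ∀ x : Lr r, (x ∈ D.pLat ∧ x ∈ ZI I) ↔ ∃ y ∈ ZI I, x = (D.p : ℤ) • y)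
    (w : ARDatum.G r) (hw : w ∈ D.Wp)
    (hconj : w * s * w⁻¹ ∈ D.WIp I)
    (ν : Lr r) (hν : toV ν = D.dot w (toV mu)) :
    Even (Nat.card (D.WI I)) ∧ (D.dotOrbit I ν).ncard = Nat.card (D.WI I) / 2 := by
  classical
  obtain ⟨hsWp, α, hαpos, m, hrefl, -⟩ := hs
  have hα2 : pairZ α (D.coroot α) = 2 := D.root_coroot_two α (D.pos_sub hαpos)
  have hss : s * s = 1 := ARProof.refl_sq D hα2 hrefl
  have hAne : toV α ≠ (0 : Vr r) := by
    intro h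
    exact D.root_ne_zero α (D.pos_sub hαpos) (ARProof.toV_injective (h.trans ARProof.toV_zero.symm))
  have hsne : s ≠ 1 := by
    intro h
    have h1 := hrefl 0
    have h2 := hrefl (toV α)
    rw [h, ARProof.G_one_apply, ARProof.pairR_zero] at h1
    rw [h, ARProof.G_one_apply, ARProof.pairR_toV, hα2] at h2
    rw [zero_sub] at h1
    have e1 : (0 - (m : ℝ) * (D.p : ℝ)) • toV α = 0 := neg_eq_zero.mp h1.symm
    have e2 : (((2 : ℤ) : ℝ) - (m : ℝ) * (D.p : ℝ)) • toV α = 0 :=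
      sub_eq_self.mp h2.symm
    rcases smul_eq_zero.mp e1 with hc | hA
    · rcases smul_eq_zero.mp e2 with hc2 | hA
      · push_cast at hc hc2
        linarith
      · exact hAne hA
    · exact hAne hA
  set σ := w * s * w⁻¹ with hσdef
  obtain ⟨uσ, huσ, yσ, hyσ, hform⟩ := ARProof.WIp_decomp D I hI hconj
  have hσWp : σ ∈ D.Wp := (ARProof.WIp_le_Wp D I hI) hconj
  have hsdotμ : D.dot s (toV mu) = toV mu := (hmustab s hsWp).mpr (Or.inr rfl)
  have hσν : D.dot σ (toV ν) = toV ν := by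
    rw [hν, ← ARProof.dot_mul, show σ * w = w * s by rw [hσdef]; group,
      ARProof.dot_mul, hsdotμ]
  have huσ0 : uσ 0 = 0 := ARProof.WI_fix0 D I huσ
  have hdotσ : ∀ x : Vr r, D.dot σ x = D.dot uσ x + toV ((D.p : ℤ) • yσ) := by
    intro x
    show σ (x + toV D.ρ) - toV D.ρ = (uσ (x + toV D.ρ) - toV D.ρ) + toV ((D.p : ℤ) • yσ)
    rw [hform]
    abel
  have hdotuσν : D.dot uσ (toV ν) = toV (ν - (D.p : ℤ) • yσ) := by
    have h1 := hdotσ (toV ν)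
    rw [hσν] at h1
    rw [ARProof.toV_sub, eq_sub_iff_add_eq]
    exact h1.symm
  have hσσ : σ * σ = 1 := by
    have : σ * σ = w * (s * s) * w⁻¹ := by rw [hσdef]; group
    rw [this, hss]
    group
  have huσne : uσ ≠ 1 := by
    intro h
    rw [h] at hform
    have h2 : ∀ v : Vr r, (σ * σ) v = v + toV ((D.p : ℤ) • yσ) + toV ((D.p : ℤ) • yσ) := by
      intro v
      rw [ARProof.G_mul_apply, hform, hform, ARProof.G_one_apply, ARProof.G_one_apply]
    have h3 := h2 0
    rw [hσσ, ARProof.G_one_apply] at h3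
    have hc : toV ((D.p : ℤ) • yσ) = 0 := by
      have h4 : toV ((D.p : ℤ) • yσ) + toV ((D.p : ℤ) • yσ) = 0 := by
        have := h3.symm
        rwa [zero_add] at this
      have h5 : (2 : ℝ) • toV ((D.p : ℤ) • yσ) = 0 := by
        rw [two_smul]
        exact h4
      rcases smul_eq_zero.mp h5 with hc | hc
      · norm_num at hc
      · exact hc
    have hσ1 : σ = 1 := by
      apply AffineEquiv.ext
      intro v
      rw [hform v, ARProof.G_one_apply, hc, add_zero]
    apply hsne
    have : s = w⁻¹ * σ * w := by rw [hσdef]; group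
    rw [this, hσ1]
    group
  set σT : D.WI I := ⟨uσ, huσ⟩ with hσT
  have hσTne : σT ≠ 1 := by
    intro h
    exact huσne (congrArg Subtype.val h)
  apply ARProof.final_count D I hI ν σT hσTne
  intro u
  constructor
  · intro hmem
    obtain ⟨d, hd, hfd⟩ := ARProof.dotLat_add D I hI u.2 ν
    have hdp : d ∈ D.pLat := by
      rw [hfd, show -(ν + d) + ν = -d by abel] at hmem
      simpa using neg_mem hmem
    obtain ⟨y, hyZI, hdy⟩ := (hpXI d).mp ⟨hdp, hd⟩
    set τ : ARDatum.G r := AffineEquiv.constVAdd ℝ (Vr r) (toV ((D.p : ℤ) • (-y))) with hτdef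
    have hτ : τ ∈ D.WIp I := ARProof.transl_mem D I (neg_mem hyZI)
    have hu0 : (u : ARDatum.G r) 0 = 0 := ARProof.WI_fix0 D I u.2
    have hgWp : w⁻¹ * (τ * (u : ARDatum.G r)) * w ∈ D.Wp :=
      mul_mem (mul_mem (inv_mem hw) (mul_mem ((ARProof.WIp_le_Wp D I hI) hτ)
        ((ARProof.WIp_le_Wp D I hI) ((ARProof.WI_le_WIp D I) u.2)))) hw
    have hτapp : ∀ x : Vr r, τ x = toV ((D.p : ℤ) • (-y)) + x := fun x => rfl
    have hτdot : ∀ x : Vr r, D.dot τ x = x + toV ((D.p : ℤ) • (-y)) := by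
      intro x
      show τ (x + toV D.ρ) - toV D.ρ = x + toV ((D.p : ℤ) • (-y))
      rw [hτapp]
      abel
    have hudotν : D.dot (u : ARDatum.G r) (toV ν) = toV (ν + d) := by
      rw [ARProof.dotLat_eq D I hI u.2 ν, hfd]
    have hτuν : D.dot (τ * (u : ARDatum.G r)) (toV ν) = toV ν := by
      rw [ARProof.dot_mul, hudotν, hτdot, ← ARProof.toV_add,
        show ν + d + (D.p : ℤ) • (-y) = ν + (d - (D.p : ℤ) • y) by rw [smul_neg]; abel,
        show ν + (d - (D.p : ℤ) • y) = ν by rw [← hdy]; abel]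
    have hgν : D.dot (w⁻¹ * (τ * (u : ARDatum.G r)) * w) (toV mu) = toV mu := by
      rw [ARProof.dot_mul, ← hν, ARProof.dot_mul, hτuν, hν, ← ARProof.dot_mul,
        inv_mul_cancel, ARProof.dot_one]
    rcases (hmustab _ hgWp).mp hgν with h1 | h1
    · left
      have hτu : τ * (u : ARDatum.G r) = 1 := by
        have h2 : τ * (u : ARDatum.G r) = w * (w⁻¹ * (τ * (u : ARDatum.G r)) * w) * w⁻¹ := by
          group
        rw [h2, h1]
        group
      have h0 : (τ * (u : ARDatum.G r)) 0 = (1 : ARDatum.G r) 0 := by rw [hτu]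
      rw [ARProof.G_mul_apply, hu0, hτapp, ARProof.G_one_apply, add_zero] at h0
      have huid : (u : ARDatum.G r) = 1 := by
        apply AffineEquiv.ext
        intro v
        have h2 : (τ * (u : ARDatum.G r)) v = (1 : ARDatum.G r) v := by rw [hτu]
        rw [ARProof.G_mul_apply, hτapp, h0, zero_add, ARProof.G_one_apply] at h2
        rw [h2, ARProof.G_one_apply]
      exact Subtype.ext huid
    · right
      have hτu : τ * (u : ARDatum.G r) = σ := by
        have h2 : τ * (u : ARDatum.G r) = w * (w⁻¹ * (τ * (u : ARDatum.G r)) * w) * w⁻¹ := by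
          group
        rw [h2, h1, ← hσdef]
      have hpt : ∀ v : Vr r, toV ((D.p : ℤ) • (-y)) + (u : ARDatum.G r) v
          = uσ v + toV ((D.p : ℤ) • yσ) := by
        intro v
        have h2 : (τ * (u : ARDatum.G r)) v = σ v := by rw [hτu]
        rw [ARProof.G_mul_apply, hτapp, hform v] at h2
        exact h2
      have h0 := hpt 0
      rw [hu0, huσ0, add_zero, zero_add] at h0
      have huσeq : (u : ARDatum.G r) = uσ := by
        apply AffineEquiv.ext
        intro v
        have h2 := hpt v
        rw [h0] at h2
        rw [add_comm (toV ((D.p : ℤ) • yσ)) ((u : ARDatum.G r) v)] at h2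
        exact add_right_cancel h2
      exact Subtype.ext huσeq
  · intro hu
    rcases hu with rfl | rfl
    · have hfν : ARProof.dotLatFun D ((1 : D.WI I) : ARDatum.G r) ν = ν := by
        apply ARProof.toV_injective
        rw [← ARProof.dotLat_eq D I hI (SetLike.coe_mem (1 : D.WI I)) ν,
          show ((1 : D.WI I) : ARDatum.G r) = 1 from rfl, ARProof.dot_one]
      rw [hfν, neg_add_cancel]
      exact zero_mem _
    · have hfν : ARProof.dotLatFun D (σT : ARDatum.G r) ν = ν - (D.p : ℤ) • yσ := by
        apply ARProof.toV_injective
        rw [← ARProof.dotLat_eq D I hI σT.2 ν]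
        exact hdotuσν
      rw [hfν]
      exact ⟨yσ, by abel⟩

end
end
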